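/- Let A be an invertible real n × n matrix and τ > 0 such that I − exp(τ·A) is invertible. Then for any continuous τ-periodic function B : ℝ → ℝⁿ, there exists a unique x₀ ∈ ℝⁿ such that the solution X(t) = exp(t·A)·x₀ + ∫₀ᵗ exp((t−s)·A)·B(s) ds satisfies X(τ) = X(0) = x₀; namely x₀ = (I − exp(τ·A))⁻¹ · ∫₀^τ exp((τ−s)·A)·B(s) ds, and the corresponding solution X is τ-periodic. -/

import Mathlib

open Matrix

private theorem expCont' {n : ℕ} :
    Continuous fun M : Matrix (Fin n) (Fin n) ℝ => NormedSpace.exp M := by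
  letI : SeminormedRing (Matrix (Fin n) (Fin n) ℝ) := Matrix.linftyOpSemiNormedRing
  letI : NormedRing (Matrix (Fin n) (Fin n) ℝ) := Matrix.linftyOpNormedRing
  letI : NormedAlgebra ℝ (Matrix (Fin n) (Fin n) ℝ) := Matrix.linftyOpNormedAlgebra
  letI : NormedAlgebra ℚ (Matrix (Fin n) (Fin n) ℝ) := Matrix.linftyOpNormedAlgebra
  exact NormedSpace.exp_continuous

theorem unique_periodic_solution_linear_ODE {n : ℕ}
    (A : Matrix (Fin n) (Fin n) ℝ) (hA : IsUnit A)
    (τ : ℝ) (hτ : 0 < τ)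
    (hI : IsUnit ((1 : Matrix (Fin n) (Fin n) ℝ) - NormedSpace.exp (τ • A)))
    (B : ℝ → Fin n → ℝ) (hB : Continuous B)
    (hBper : ∀ t, B (t + τ) = B t)
    (X : (Fin n → ℝ) → ℝ → (Fin n → ℝ))
    (hX : ∀ x₀ t, X x₀ t = NormedSpace.exp (t • A) *ᵥ x₀
        + ∫ s in (0:ℝ)..t, NormedSpace.exp ((t - s) • A) *ᵥ B s) :
    (∃! x₀ : Fin n → ℝ, X x₀ τ = x₀) ∧
    (∀ x₀ : Fin n → ℝ,
      x₀ = ((1 : Matrix (Fin n) (Fin n) ℝ) - NormedSpace.exp (τ • A))⁻¹ *ᵥ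
            (∫ s in (0:ℝ)..τ, NormedSpace.exp ((τ - s) • A) *ᵥ B s) →
      X x₀ τ = x₀ ∧ ∀ t, X x₀ (t + τ) = X x₀ t) := by
  set E := NormedSpace.exp (τ • A) with hE
  set C := ∫ s in (0:ℝ)..τ, NormedSpace.exp ((τ - s) • A) *ᵥ B s with hC
  have hIdet : IsUnit ((1 - E).det) := (Matrix.isUnit_iff_isUnit_det _).mp hI
  have hinv1 : (1 - E)⁻¹ * (1 - E) = 1 := Matrix.nonsing_inv_mul _ hIdet
  have hinv2 : (1 - E) * (1 - E)⁻¹ = 1 := Matrix.mul_nonsing_inv _ hIdet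
  have hcont : ∀ c : ℝ, Continuous fun s : ℝ => NormedSpace.exp ((c - s) • A) *ᵥ B s :=
    fun c => Continuous.matrix_mulVec (expCont'.comp (by fun_prop)) hB
  have hint : ∀ (c a b : ℝ),
      IntervalIntegrable (fun s => NormedSpace.exp ((c - s) • A) *ᵥ B s)
        MeasureTheory.volume a b := fun c a b => (hcont c).intervalIntegrable a b
  have key : ∀ x₀ : Fin n → ℝ, X x₀ τ = x₀ ↔ x₀ = (1 - E)⁻¹ *ᵥ C := by
    intro x₀
    rw [hX, ← hC, ← hE]
    constructor
    · intro h
      have h1 : (1 - E) *ᵥ x₀ = C := by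
        rw [Matrix.sub_mulVec, Matrix.one_mulVec]
        exact (eq_sub_of_add_eq' h).symm
      calc x₀ = 1 *ᵥ x₀ := (Matrix.one_mulVec _).symm
        _ = ((1 - E)⁻¹ * (1 - E)) *ᵥ x₀ := by rw [hinv1]
        _ = (1 - E)⁻¹ *ᵥ ((1 - E) *ᵥ x₀) := by rw [Matrix.mulVec_mulVec]
        _ = (1 - E)⁻¹ *ᵥ C := by rw [h1]
    · intro h
      have h1 : (1 - E) *ᵥ x₀ = C := by
        rw [h, Matrix.mulVec_mulVec, hinv2, Matrix.one_mulVec]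
      rw [Matrix.sub_mulVec, Matrix.one_mulVec] at h1
      rw [← h1]; abel
  have per : ∀ x₀ : Fin n → ℝ, X x₀ τ = x₀ → ∀ t, X x₀ (t + τ) = X x₀ t := by
    intro x₀ hfix t
    have hfix' := hfix
    rw [hX, ← hC, ← hE] at hfix'
    have hEadd : NormedSpace.exp ((t + τ) • A) = NormedSpace.exp (t • A) * E := by
      rw [hE, add_smul]
      exact Matrix.exp_add_of_commute _ _ (Commute.smul_left (Commute.smul_right rfl τ) t)
    have hsplit : (∫ s in (0:ℝ)..(t + τ), NormedSpace.exp ((t + τ - s) • A) *ᵥ B s)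
        = (∫ s in (0:ℝ)..τ, NormedSpace.exp ((t + τ - s) • A) *ᵥ B s)
          + ∫ s in τ..(t + τ), NormedSpace.exp ((t + τ - s) • A) *ᵥ B s :=
      (intervalIntegral.integral_add_adjacent_intervals (hint _ _ _) (hint _ _ _)).symm
    have h2 : (∫ s in τ..(t + τ), NormedSpace.exp ((t + τ - s) • A) *ᵥ B s)
        = ∫ s in (0:ℝ)..t, NormedSpace.exp ((t - s) • A) *ᵥ B s := by
      have hshift := intervalIntegral.integral_comp_add_right (a := 0) (b := t)
        (fun s => NormedSpace.exp ((t + τ - s) • A) *ᵥ B s) τ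
      rw [zero_add] at hshift
      rw [← hshift]
      congr 1
      funext s
      rw [hBper s, show t + τ - (s + τ) = t - s by ring]
    have h1 : (∫ s in (0:ℝ)..τ, NormedSpace.exp ((t + τ - s) • A) *ᵥ B s)
        = NormedSpace.exp (t • A) *ᵥ C := by
      have heq : ∀ s : ℝ, NormedSpace.exp ((t + τ - s) • A) *ᵥ B s
          = NormedSpace.exp (t • A) *ᵥ (NormedSpace.exp ((τ - s) • A) *ᵥ B s) := by
        intro s
        rw [Matrix.mulVec_mulVec,
          ← Matrix.exp_add_of_commute _ _ (Commute.smul_left (Commute.smul_right rfl (τ - s)) t),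
          ← add_smul, show t + (τ - s) = t + τ - s by ring]
      simp_rw [heq]
      exact (Matrix.mulVecLin
        (NormedSpace.exp (t • A))).toContinuousLinearMap.intervalIntegral_comp_comm (hint τ 0 τ)
    rw [hX, hX, hsplit, h1, h2, hEadd, ← Matrix.mulVec_mulVec]
    have hcomb : NormedSpace.exp (t • A) *ᵥ (E *ᵥ x₀) + NormedSpace.exp (t • A) *ᵥ C
        = NormedSpace.exp (t • A) *ᵥ x₀ := by
      rw [← Matrix.mulVec_add, hfix']
    rw [← add_assoc, hcomb]
  refine ⟨⟨(1 - E)⁻¹ *ᵥ C, (key _).mpr rfl, fun y hy => (key y).mp hy⟩, ?_⟩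
  intro x₀ hx₀
  have hfix := (key x₀).mpr hx₀
  exact ⟨hfix, per x₀ hfix⟩
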